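/- Let n ≥ 3, let m ∈ ℝ with m ≠ 1, let U ⊆ ℝⁿ be open, and let a : U → (symmetric invertible n×n real matrices) be a smooth matrix field in Kundt form with data H, W_a, h_{ab} where W_a and h_{ab} are independent of the coordinate v. Let ᵅΓ^k_{ij} be the Christoffel symbols of a and define Γ^k_{ij} = ᵅΓ^k_{ij} + (m/(2(1−m))) ∂_v H · ( a_{ij} δ^k_v + δ^k_j δ^u_i + δ^k_i δ^u_j ). Then the affine Ricci tensor R̄_{ij} of Γ satisfies R̄_{[ij]} := (1/2)(R̄_{ij} − R̄_{ji}) = −(m n/(4(1−m))) ( δ^u_i ∂_j ∂_v H − δ^u_j ∂_i ∂_v H ); in particular, along the way, the trace of the correction term is Σ_k (m/(2(1−m))) ∂_v H (a_{kj} δ^k_v + δ^k_j δ^u_k + δ^k_k δ^u_j) = (m n/(2(1−m))) ∂_v H · δ^u_j. -/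

import Mathlib

open Matrix
open scoped BigOperators

noncomputable section

/-- Partial derivative of `f : ℝⁿ → ℝ` in the `i`-th coordinate direction at `p`. -/
def pd {n : ℕ} (i : Fin n) (f : (Fin n → ℝ) → ℝ) (p : Fin n → ℝ) : ℝ :=
  fderiv ℝ f p (Pi.single i 1)

/-- Christoffel symbols `Γ^k_{ij}` of a matrix field `a`. -/
def christoffel {n : ℕ} (a : (Fin n → ℝ) → Matrix (Fin n) (Fin n) ℝ)
    (k i j : Fin n) (p : Fin n → ℝ) : ℝ :=
  (1 / 2) * ∑ l, (a p)⁻¹ k l *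
    (pd i (fun q => a q j l) p + pd j (fun q => a q i l) p - pd l (fun q => a q i j) p)

/-- The coordinate index `u` (the first coordinate). -/
def uIdx {n : ℕ} (_hn : 3 ≤ n) : Fin n := ⟨0, by omega⟩

/-- The coordinate index `v` (the second coordinate). -/
def vIdx {n : ℕ} (_hn : 3 ≤ n) : Fin n := ⟨1, by omega⟩

/-- The embedding of the transverse indices `{3,…,n}` (zero-based: `{2,…,n-1}`). -/
def embIdx {n : ℕ} (i : Fin (n - 2)) : Fin n := ⟨(i : ℕ) + 2, by have := i.isLt; omega⟩

/-- A matrix is in Kundt form with data `H`, `W`, `h`. -/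
def IsKundt {n : ℕ} (hn : 3 ≤ n) (M : Matrix (Fin n) (Fin n) ℝ)
    (H : ℝ) (W : Fin n → ℝ) (h : Fin n → Fin n → ℝ) : Prop :=
  M (uIdx hn) (uIdx hn) = H ∧
  M (uIdx hn) (vIdx hn) = -1 ∧ M (vIdx hn) (uIdx hn) = -1 ∧ M (vIdx hn) (vIdx hn) = 0 ∧
  (∀ a : Fin n, 2 ≤ (a : ℕ) →
    M (uIdx hn) a = W a / 2 ∧ M a (uIdx hn) = W a / 2 ∧
    M (vIdx hn) a = 0 ∧ M a (vIdx hn) = 0) ∧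
  (∀ a b : Fin n, 2 ≤ (a : ℕ) → 2 ≤ (b : ℕ) → M a b = h a b)

/-- The affine Ricci tensor `R̄_{lk}` of a connection with coefficients `Γ^k_{ij}`. -/
def affineRicci {n : ℕ} (Γ : Fin n → Fin n → Fin n → (Fin n → ℝ) → ℝ)
    (l k : Fin n) (p : Fin n → ℝ) : ℝ :=
  (∑ i, pd i (Γ i k l) p) - pd k (fun q => ∑ i, Γ i i l q) p +
    ∑ i, ∑ m, (Γ i m i p * Γ m k l p - Γ i m k p * Γ m i l p)

namespace KundtAux


variable {n : ℕ}

lemma pd_congr {i : Fin n} {f g : (Fin n → ℝ) → ℝ} {p : Fin n → ℝ}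
    (h : f =ᶠ[nhds p] g) : pd i f p = pd i g p := by
  unfold pd; rw [Filter.EventuallyEq.fderiv_eq h]

lemma pd_congr_on {U : Set (Fin n → ℝ)} (hU : IsOpen U) {p : Fin n → ℝ} (hp : p ∈ U)
    {f g : (Fin n → ℝ) → ℝ} (h : ∀ q ∈ U, f q = g q) (i : Fin n) :
    pd i f p = pd i g p :=
  pd_congr (Filter.eventuallyEq_of_mem (hU.mem_nhds hp) h)

lemma pd_add {i : Fin n} {f g : (Fin n → ℝ) → ℝ} {p : Fin n → ℝ}
    (hf : DifferentiableAt ℝ f p) (hg : DifferentiableAt ℝ g p) :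
    pd i (fun q => f q + g q) p = pd i f p + pd i g p := by
  unfold pd; rw [fderiv_fun_add hf hg]; rfl

lemma pd_sub {i : Fin n} {f g : (Fin n → ℝ) → ℝ} {p : Fin n → ℝ}
    (hf : DifferentiableAt ℝ f p) (hg : DifferentiableAt ℝ g p) :
    pd i (fun q => f q - g q) p = pd i f p - pd i g p := by
  unfold pd; rw [fderiv_fun_sub hf hg]; rfl

lemma pd_mul {i : Fin n} {f g : (Fin n → ℝ) → ℝ} {p : Fin n → ℝ}
    (hf : DifferentiableAt ℝ f p) (hg : DifferentiableAt ℝ g p) :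
    pd i (fun q => f q * g q) p = pd i f p * g p + f p * pd i g p := by
  unfold pd; rw [fderiv_fun_mul hf hg]
  simp [ContinuousLinearMap.add_apply, ContinuousLinearMap.smul_apply]
  ring

lemma pd_const {i : Fin n} {p : Fin n → ℝ} (c : ℝ) :
    pd i (fun _ => c) p = 0 := by
  unfold pd; rw [fderiv_fun_const]; rfl

lemma pd_const_mul {i : Fin n} {f : (Fin n → ℝ) → ℝ} {p : Fin n → ℝ}
    (hf : DifferentiableAt ℝ f p) (c : ℝ) :
    pd i (fun q => c * f q) p = c * pd i f p := by
  unfold pd; rw [fderiv_const_mul hf]; rfl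

lemma pd_sum {ι : Type*} {s : Finset ι} {F : ι → (Fin n → ℝ) → ℝ} {i : Fin n} {p : Fin n → ℝ}
    (hF : ∀ k ∈ s, DifferentiableAt ℝ (F k) p) :
    pd i (fun q => ∑ k ∈ s, F k q) p = ∑ k ∈ s, pd i (F k) p := by
  unfold pd; rw [fderiv_fun_sum hF]; simp

lemma contDiffAt_pd {i : Fin n} {f : (Fin n → ℝ) → ℝ} {p : Fin n → ℝ}
    (hf : ContDiffAt ℝ (⊤ : ℕ∞) f p) : ContDiffAt ℝ (⊤ : ℕ∞) (pd i f) p := by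
  have h1 : ContDiffAt ℝ (⊤ : ℕ∞) (fderiv ℝ f) p := hf.fderiv_right (by simp)
  exact h1.clm_apply contDiffAt_const

lemma pd_comm {f : (Fin n → ℝ) → ℝ} {p : Fin n → ℝ}
    (hf : ContDiffAt ℝ (⊤ : ℕ∞) f p) (i j : Fin n) :
    pd i (pd j f) p = pd j (pd i f) p := by
  have hd : DifferentiableAt ℝ (fderiv ℝ f) p :=
    (hf.fderiv_right (m := (⊤:ℕ∞)) (by simp)).differentiableAt (by simp)
  have key : ∀ w v : Fin n → ℝ, fderiv ℝ (fun q => fderiv ℝ f q w) p v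
      = fderiv ℝ (fderiv ℝ f) p v w := by
    intro w v
    rw [fderiv_clm_apply hd (differentiableAt_const w)]
    simp
  have hs := hf.isSymmSndFDerivAt (by rw [minSmoothness_of_isRCLikeNormedField]; exact WithTop.coe_le_coe.mpr (le_top : (2 : ℕ∞) ≤ ⊤))
  unfold pd
  rw [key, key, hs]


lemma contDiffAt_detA {A : (Fin n → ℝ) → Matrix (Fin n) (Fin n) ℝ} {p : Fin n → ℝ}
    (hA : ∀ i j, ContDiffAt ℝ (⊤ : ℕ∞) (fun q => A q i j) p) :
    ContDiffAt ℝ (⊤ : ℕ∞) (fun q => (A q).det) p := by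
  have h : (fun q => (A q).det)
      = fun q => ∑ σ : Equiv.Perm (Fin n),
          (((Equiv.Perm.sign σ : ℤ) : ℝ)) * ∏ i, A q (σ i) i := by
    funext q; rw [Matrix.det_apply]
    simp [Units.smul_def, zsmul_eq_mul]
  rw [h]
  exact ContDiffAt.sum fun σ _ =>
    contDiffAt_const.mul (contDiffAt_prod fun i _ => hA (σ i) i)

lemma contDiffAt_inv_entry {A : (Fin n → ℝ) → Matrix (Fin n) (Fin n) ℝ} {p : Fin n → ℝ}
    (hA : ∀ i j, ContDiffAt ℝ (⊤ : ℕ∞) (fun q => A q i j) p)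
    (hdet : (A p).det ≠ 0) (k l : Fin n) :
    ContDiffAt ℝ (⊤ : ℕ∞) (fun q => (A q)⁻¹ k l) p := by
  have h : (fun q => (A q)⁻¹ k l) = fun q => ((A q).det)⁻¹ * (A q).adjugate k l := by
    funext q; rw [Matrix.inv_def]
    simp [Ring.inverse_eq_inv, Matrix.smul_apply, smul_eq_mul]
  rw [h]
  refine ContDiffAt.mul ((contDiffAt_detA hA).inv hdet) ?_
  have h2 : (fun q => (A q).adjugate k l)
      = fun q => ((A q).updateRow l (Pi.single k 1)).det := by
    funext q; rw [Matrix.adjugate_apply]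
  rw [h2]
  apply contDiffAt_detA
  intro i j
  by_cases hil : i = l
  · simp only [Matrix.updateRow_apply, hil, if_true, if_pos]
    exact contDiffAt_const
  · simp only [Matrix.updateRow_apply, hil, if_false]
    exact hA i j


lemma sum4_swap {n : ℕ} (f : Fin n → Fin n → Fin n → Fin n → ℝ) :
    ∑ k, ∑ l, ∑ s, ∑ t, f k l s t = ∑ k, ∑ l, ∑ s, ∑ t, f s t k l :=
  calc ∑ k, ∑ l, ∑ s, ∑ t, f k l s t
      = ∑ k, ∑ s, ∑ l, ∑ t, f k l s t :=
        Finset.sum_congr rfl fun k _ => Finset.sum_comm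
    _ = ∑ s, ∑ k, ∑ l, ∑ t, f k l s t := Finset.sum_comm
    _ = ∑ s, ∑ k, ∑ t, ∑ l, f k l s t :=
        Finset.sum_congr rfl fun s _ => Finset.sum_congr rfl fun k _ => Finset.sum_comm
    _ = ∑ s, ∑ t, ∑ k, ∑ l, f k l s t :=
        Finset.sum_congr rfl fun s _ => Finset.sum_comm



end KundtAux

theorem stmt9 {n : ℕ} (hn : 3 ≤ n) (m : ℝ) (hm : m ≠ 1)
    (U : Set (Fin n → ℝ)) (hU : IsOpen U)
    (a : (Fin n → ℝ) → Matrix (Fin n) (Fin n) ℝ)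
    (ha_smooth : ∀ i j, ContDiffOn ℝ (⊤ : ℕ∞) (fun p => a p i j) U)
    (ha_symm : ∀ p ∈ U, (a p).IsSymm) (ha_inv : ∀ p ∈ U, IsUnit (a p).det)
    (H : (Fin n → ℝ) → ℝ) (W : (Fin n → ℝ) → Fin n → ℝ)
    (h : (Fin n → ℝ) → Fin n → Fin n → ℝ)
    (hH : ContDiffOn ℝ (⊤ : ℕ∞) H U)
    (hKundt : ∀ p ∈ U, IsKundt hn (a p) (H p) (W p) (h p))
    (hWv : ∀ p c i, W (Function.update p (vIdx hn) c) i = W p i)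
    (hhv : ∀ p c i j, h (Function.update p (vIdx hn) c) i j = h p i j)
    (Γ : Fin n → Fin n → Fin n → (Fin n → ℝ) → ℝ)
    (hΓ : ∀ k i j p, Γ k i j p = christoffel a k i j p
      + m / (2 * (1 - m)) * pd (vIdx hn) H p *
        (a p i j * (if k = vIdx hn then (1 : ℝ) else 0)
          + (if k = j then (1 : ℝ) else 0) * (if i = uIdx hn then (1 : ℝ) else 0)
          + (if k = i then (1 : ℝ) else 0) * (if j = uIdx hn then (1 : ℝ) else 0))) :
    ∀ p ∈ U,
      (∀ i j : Fin n,
        (1 / 2) * (affineRicci Γ i j p - affineRicci Γ j i p)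
          = -(m * (n : ℝ) / (4 * (1 - m))) *
              ((if i = uIdx hn then (1 : ℝ) else 0) * pd j (fun q => pd (vIdx hn) H q) p
                - (if j = uIdx hn then (1 : ℝ) else 0) * pd i (fun q => pd (vIdx hn) H q) p))
      ∧ (∀ j : Fin n,
        (∑ k, m / (2 * (1 - m)) * pd (vIdx hn) H p *
            (a p k j * (if k = vIdx hn then (1 : ℝ) else 0)
              + (if k = j then (1 : ℝ) else 0) * (if k = uIdx hn then (1 : ℝ) else 0)
              + 1 * (if j = uIdx hn then (1 : ℝ) else 0)))
          = m * (n : ℝ) / (2 * (1 - m)) * pd (vIdx hn) H p *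
              (if j = uIdx hn then (1 : ℝ) else 0)) := by
  intro p hp
  -- index facts
  have huv : uIdx hn ≠ vIdx hn := by
    intro hEq
    have := congrArg Fin.val hEq
    simp [uIdx, vIdx] at this
  have idx3 : ∀ l : Fin n, l = uIdx hn ∨ l = vIdx hn ∨ 2 ≤ (l : ℕ) := by
    intro l
    by_cases h0 : (l : ℕ) = 0
    · exact Or.inl (Fin.ext (by simpa [uIdx] using h0))
    · by_cases h1 : (l : ℕ) = 1
      · exact Or.inr (Or.inl (Fin.ext (by simpa [vIdx] using h1)))
      · exact Or.inr (Or.inr (by omega))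
  -- symmetry of entries on U
  have haS : ∀ q ∈ U, ∀ k l : Fin n, a q k l = a q l k := by
    intro q hq k l
    have h1 : (a q)ᵀ = a q := ha_symm q hq
    have h2 := congrFun (congrFun h1 l) k
    simpa [Matrix.transpose_apply] using h2
  -- Kundt value of a q v l
  have hav : ∀ q ∈ U, ∀ l : Fin n,
      a q (vIdx hn) l = -(if l = uIdx hn then (1 : ℝ) else 0) := by
    intro q hq l
    obtain ⟨k1, k2, k3, k4, k5, k6⟩ := hKundt q hq
    rcases idx3 l with h0 | h0 | h0
    · subst h0; simp [k3]
    · subst h0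
      have : vIdx hn ≠ uIdx hn := fun hEq => huv hEq.symm
      simp [k4, this]
    · have h5 := (k5 l h0).2.2.1
      have hlu : l ≠ uIdx hn := by
        intro hEq
        rw [hEq] at h0
        simp [uIdx] at h0
      simp [h5, hlu]
  -- smoothness
  have smA : ∀ k l : Fin n, ContDiffAt ℝ (⊤ : ℕ∞) (fun q => a q k l) p :=
    fun k l => (ha_smooth k l).contDiffAt (hU.mem_nhds hp)
  have hdet : (a p).det ≠ 0 := (ha_inv p hp).ne_zero
  have smB : ∀ k l : Fin n, ContDiffAt ℝ (⊤ : ℕ∞) (fun q => (a q)⁻¹ k l) p :=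
    fun k l => KundtAux.contDiffAt_inv_entry smA hdet k l
  have smH' : ContDiffAt ℝ (⊤ : ℕ∞) H p := hH.contDiffAt (hU.mem_nhds hp)
  have dtop : ∀ {f : (Fin n → ℝ) → ℝ}, ContDiffAt ℝ (⊤ : ℕ∞) f p → DifferentiableAt ℝ f p :=
    fun hf => hf.differentiableAt (by simp)
  have dA : ∀ k l : Fin n, DifferentiableAt ℝ (fun q => a q k l) p := fun k l => dtop (smA k l)
  have dB : ∀ k l : Fin n, DifferentiableAt ℝ (fun q => (a q)⁻¹ k l) p :=
    fun k l => dtop (smB k l)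
  have dpdA : ∀ (j k l : Fin n), DifferentiableAt ℝ (pd j (fun q => a q k l)) p :=
    fun j k l => dtop (KundtAux.contDiffAt_pd (smA k l))
  have dpdvH : DifferentiableAt ℝ (pd (vIdx hn) H) p := dtop (KundtAux.contDiffAt_pd smH')
  -- the correction-trace sum
  have esum : ∀ q ∈ U, ∀ l : Fin n,
      (∑ r : Fin n, (a q r l * (if r = vIdx hn then (1 : ℝ) else 0)
        + (if r = l then (1 : ℝ) else 0) * (if r = uIdx hn then (1 : ℝ) else 0)
        + 1 * (if l = uIdx hn then (1 : ℝ) else 0)))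
      = (n : ℝ) * (if l = uIdx hn then (1 : ℝ) else 0) := by
    intro q hq l
    rw [Finset.sum_add_distrib, Finset.sum_add_distrib]
    have s1 : ∑ r : Fin n, a q r l * (if r = vIdx hn then (1 : ℝ) else 0)
        = a q (vIdx hn) l := by
      simp [mul_ite]
    have s2 : ∑ r : Fin n, (if r = l then (1 : ℝ) else 0) * (if r = uIdx hn then (1 : ℝ) else 0)
        = (if l = uIdx hn then (1 : ℝ) else 0) := by
      by_cases hlu : l = uIdx hn
      · subst hlu; simp
      · have hz : ∀ r : Fin n,
            (if r = l then (1 : ℝ) else 0) * (if r = uIdx hn then (1 : ℝ) else 0) = 0 := by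
          intro r
          by_cases hr : r = l
          · subst hr; simp [hlu]
          · simp [hr]
        simp [hz, hlu]
    have s3 : ∑ _r : Fin n, (1 : ℝ) * (if l = uIdx hn then (1 : ℝ) else 0)
        = (n : ℝ) * (if l = uIdx hn then (1 : ℝ) else 0) := by
      simp [Finset.sum_const, Finset.card_univ]
    rw [s1, s2, s3, hav q hq l]
    ring
  -- conjunct 2
  have conj2 : ∀ j : Fin n,
      (∑ k, m / (2 * (1 - m)) * pd (vIdx hn) H p *
          (a p k j * (if k = vIdx hn then (1 : ℝ) else 0)
            + (if k = j then (1 : ℝ) else 0) * (if k = uIdx hn then (1 : ℝ) else 0)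
            + 1 * (if j = uIdx hn then (1 : ℝ) else 0)))
        = m * (n : ℝ) / (2 * (1 - m)) * pd (vIdx hn) H p *
            (if j = uIdx hn then (1 : ℝ) else 0) := by
    intro j
    rw [← Finset.mul_sum, esum p hp j]
    ring
  refine ⟨?_, conj2⟩
  -- ===================== conjunct 1 =====================
  -- pd-symmetry of entries
  have hpd_symA : ∀ q ∈ U, ∀ (l i j : Fin n),
      pd l (fun r => a r i j) q = pd l (fun r => a r j i) q := by
    intro q hq l i j
    exact KundtAux.pd_congr_on hU hq (fun r hr => haS r hr i j) l
  -- symmetry of christoffel and Γ in the lower indices, on U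
  have hchr_sym : ∀ (k i j : Fin n), ∀ q ∈ U, christoffel a k i j q = christoffel a k j i q := by
    intro k i j q hq
    simp only [christoffel]
    congr 1
    refine Finset.sum_congr rfl fun l _ => ?_
    rw [hpd_symA q hq l i j]
    ring
  have hGsym : ∀ (k i j : Fin n), ∀ q ∈ U, Γ k i j q = Γ k j i q := by
    intro k i j q hq
    rw [hΓ, hΓ, hchr_sym k i j q hq, haS q hq i j]
    ring
  -- step A: antisymmetric Ricci reduces to the trace term
  have stepA : ∀ i j : Fin n, affineRicci Γ i j p - affineRicci Γ j i p
      = pd i (fun q => ∑ r, Γ r r j q) p - pd j (fun q => ∑ r, Γ r r i q) p := by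
    intro i j
    simp only [affineRicci]
    have h2 : (∑ r : Fin n, pd r (Γ r j i) p) = ∑ r : Fin n, pd r (Γ r i j) p :=
      Finset.sum_congr rfl fun r _ =>
        KundtAux.pd_congr_on hU hp (fun q hq => hGsym r j i q hq) r
    have h4 : (∑ r : Fin n, ∑ s : Fin n, Γ r s j p * Γ s r i p)
        = ∑ r : Fin n, ∑ s : Fin n, Γ r s i p * Γ s r j p := by
      rw [Finset.sum_comm]
      exact Finset.sum_congr rfl fun s _ => Finset.sum_congr rfl fun r _ => mul_comm _ _
    have h5 : (∑ r : Fin n, ∑ s : Fin n, Γ r s r p * Γ s j i p)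
        = ∑ r : Fin n, ∑ s : Fin n, Γ r s r p * Γ s i j p :=
      Finset.sum_congr rfl fun r _ => Finset.sum_congr rfl fun s _ => by
        rw [hGsym s j i p hp]
    simp only [Finset.sum_sub_distrib]
    rw [h2, h4, h5]
    ring
  -- step B: Γ-trace on U
  have hS_eq : ∀ l : Fin n, ∀ q ∈ U, (∑ r, Γ r r l q)
      = (∑ r, christoffel a r r l q)
        + (m / (2 * (1 - m)) * (n : ℝ) * (if l = uIdx hn then (1 : ℝ) else 0))
          * pd (vIdx hn) H q := by
    intro l q hq
    simp only [hΓ]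
    rw [Finset.sum_add_distrib]
    congr 1
    simp only [if_true]
    rw [← Finset.mul_sum, esum q hq l]
    ring
  -- smoothness of christoffel trace
  have smChr : ∀ k i j : Fin n, ContDiffAt ℝ (⊤ : ℕ∞) (christoffel a k i j) p := by
    intro k i j
    have hrw : christoffel a k i j = fun q => (1 / 2 : ℝ) * ∑ l, (a q)⁻¹ k l *
        (pd i (fun r => a r j l) q + pd j (fun r => a r i l) q
          - pd l (fun r => a r i j) q) := by
      funext q; simp only [christoffel]
    rw [hrw]
    exact contDiffAt_const.mul (ContDiffAt.sum fun s _ => (smB k s).mul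
      (((KundtAux.contDiffAt_pd (smA j s)).add (KundtAux.contDiffAt_pd (smA i s))).sub
        (KundtAux.contDiffAt_pd (smA i j))))
  have dCT : ∀ l : Fin n, DifferentiableAt ℝ (fun q => ∑ r, christoffel a r r l q) p :=
    fun l => DifferentiableAt.fun_sum fun r _ => dtop (smChr r r l)
  -- pd of the Γ-trace
  have hpdS : ∀ (i l : Fin n), pd i (fun q => ∑ r, Γ r r l q) p
      = pd i (fun q => ∑ r, christoffel a r r l q) p
        + (m / (2 * (1 - m)) * (n : ℝ) * (if l = uIdx hn then (1 : ℝ) else 0))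
          * pd i (pd (vIdx hn) H) p := by
    intro i l
    rw [KundtAux.pd_congr_on hU hp (fun q hq => hS_eq l q hq) i]
    rw [KundtAux.pd_add (dCT l) (dpdvH.const_mul _)]
    congr 1
    exact KundtAux.pd_const_mul dpdvH _
  -- step C: christoffel trace equals (1/2) tr(a⁻¹ ∂ₗ a) on U
  have hCT_F : ∀ l : Fin n, ∀ q ∈ U, (∑ r, christoffel a r r l q)
      = (1 / 2 : ℝ) * ∑ k, ∑ s, (a q)⁻¹ k s * pd l (fun r => a r k s) q := by
    intro l q hq
    have hBsym : ∀ k s : Fin n, (a q)⁻¹ k s = (a q)⁻¹ s k := by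
      intro k s
      have h1 : ((a q)⁻¹)ᵀ = (a q)⁻¹ := by
        rw [Matrix.transpose_nonsing_inv]
        have h2 : (a q)ᵀ = a q := ha_symm q hq
        rw [h2]
      have h2 := congrFun (congrFun h1 s) k
      simpa [Matrix.transpose_apply] using h2
    have hT13 : (∑ r : Fin n, ∑ s : Fin n, (a q)⁻¹ r s * pd r (fun w => a w l s) q)
        = ∑ r : Fin n, ∑ s : Fin n, (a q)⁻¹ r s * pd s (fun w => a w r l) q := by
      rw [Finset.sum_comm]
      refine Finset.sum_congr rfl fun s _ => Finset.sum_congr rfl fun r _ => ?_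
      rw [hBsym r s, hpd_symA q hq r l s]
    calc (∑ r, christoffel a r r l q)
        = ∑ r : Fin n, (1 / 2 : ℝ) * ∑ s, (a q)⁻¹ r s *
            (pd r (fun w => a w l s) q + pd l (fun w => a w r s) q
              - pd s (fun w => a w r l) q) := by
          simp only [christoffel]
      _ = (1 / 2 : ℝ) * ∑ r : Fin n, ∑ s : Fin n,
            ((a q)⁻¹ r s * pd r (fun w => a w l s) q
              + (a q)⁻¹ r s * pd l (fun w => a w r s) q
              - (a q)⁻¹ r s * pd s (fun w => a w r l) q) := by
          rw [← Finset.mul_sum]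
          congr 1
          refine Finset.sum_congr rfl fun r _ => Finset.sum_congr rfl fun s _ => by ring
      _ = (1 / 2 : ℝ) * ((∑ r : Fin n, ∑ s : Fin n, (a q)⁻¹ r s * pd r (fun w => a w l s) q)
            + (∑ r : Fin n, ∑ s : Fin n, (a q)⁻¹ r s * pd l (fun w => a w r s) q)
            - (∑ r : Fin n, ∑ s : Fin n, (a q)⁻¹ r s * pd s (fun w => a w r l) q)) := by
          simp only [Finset.sum_add_distrib, Finset.sum_sub_distrib]
      _ = (1 / 2 : ℝ) * ∑ k, ∑ s, (a q)⁻¹ k s * pd l (fun r => a r k s) q := by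
          rw [hT13]; ring
  -- derivative of the inverse matrix entries at p
  have hpdB : ∀ (i k l : Fin n), pd i (fun q => (a q)⁻¹ k l) p
      = -∑ t, ∑ s, (a p)⁻¹ k s * pd i (fun r => a r s t) p * (a p)⁻¹ t l := by
    intro i k l
    have hrow : ∀ t : Fin n, (∑ s, pd i (fun q => (a q)⁻¹ k s) p * a p s t)
        = -∑ s, (a p)⁻¹ k s * pd i (fun r => a r s t) p := by
      intro t
      have hg : ∀ q ∈ U, (∑ s, (a q)⁻¹ k s * a q s t) = (if k = t then (1 : ℝ) else 0) := by
        intro q hq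
        have h1 : (a q)⁻¹ * a q = 1 := Matrix.nonsing_inv_mul (a q) (ha_inv q hq)
        calc (∑ s, (a q)⁻¹ k s * a q s t) = ((a q)⁻¹ * a q) k t := (Matrix.mul_apply).symm
          _ = (1 : Matrix (Fin n) (Fin n) ℝ) k t := by rw [h1]
          _ = if k = t then 1 else 0 := Matrix.one_apply
      have h0 : pd i (fun q => ∑ s, (a q)⁻¹ k s * a q s t) p = 0 := by
        rw [KundtAux.pd_congr_on hU hp hg i, KundtAux.pd_const]
      have h1 : pd i (fun q => ∑ s, (a q)⁻¹ k s * a q s t) p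
          = ∑ s, (pd i (fun q => (a q)⁻¹ k s) p * a p s t
              + (a p)⁻¹ k s * pd i (fun r => a r s t) p) := by
        rw [KundtAux.pd_sum (fun s _ => (dB k s).fun_mul (dA s t))]
        exact Finset.sum_congr rfl fun s _ => KundtAux.pd_mul (dB k s) (dA s t)
      rw [h1, Finset.sum_add_distrib] at h0
      linarith [h0]
    have hcol : ∀ s : Fin n, (∑ t, a p s t * (a p)⁻¹ t l) = if s = l then (1 : ℝ) else 0 := by
      intro s
      have h1 : a p * (a p)⁻¹ = 1 := Matrix.mul_nonsing_inv (a p) (ha_inv p hp)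
      calc (∑ t, a p s t * (a p)⁻¹ t l) = (a p * (a p)⁻¹) s l := (Matrix.mul_apply).symm
        _ = (1 : Matrix (Fin n) (Fin n) ℝ) s l := by rw [h1]
        _ = if s = l then 1 else 0 := Matrix.one_apply
    have h2 : pd i (fun q => (a q)⁻¹ k l) p
        = ∑ t, (∑ s, pd i (fun q => (a q)⁻¹ k s) p * a p s t) * (a p)⁻¹ t l := by
      calc pd i (fun q => (a q)⁻¹ k l) p
          = ∑ s, pd i (fun q => (a q)⁻¹ k s) p * (if s = l then (1 : ℝ) else 0) := by
            simp [mul_ite]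
        _ = ∑ s, pd i (fun q => (a q)⁻¹ k s) p * (∑ t, a p s t * (a p)⁻¹ t l) :=
            Finset.sum_congr rfl fun s _ => by rw [hcol s]
        _ = ∑ s, ∑ t, pd i (fun q => (a q)⁻¹ k s) p * (a p s t * (a p)⁻¹ t l) :=
            Finset.sum_congr rfl fun s _ => Finset.mul_sum _ _ _
        _ = ∑ t, ∑ s, (pd i (fun q => (a q)⁻¹ k s) p * a p s t) * (a p)⁻¹ t l := by
            rw [Finset.sum_comm]
            exact Finset.sum_congr rfl fun t _ => Finset.sum_congr rfl fun s _ => by ring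
        _ = ∑ t, (∑ s, pd i (fun q => (a q)⁻¹ k s) p * a p s t) * (a p)⁻¹ t l :=
            Finset.sum_congr rfl fun t _ => (Finset.sum_mul _ _ _).symm
    rw [h2, ← Finset.sum_neg_distrib]
    refine Finset.sum_congr rfl fun t _ => ?_
    rw [hrow t, neg_mul, Finset.sum_mul]
  -- differentiability of the F functional
  have dF : ∀ j : Fin n, DifferentiableAt ℝ
      (fun q => ∑ k, ∑ s, (a q)⁻¹ k s * pd j (fun r => a r k s) q) p :=
    fun j => DifferentiableAt.fun_sum fun k _ => DifferentiableAt.fun_sum fun s _ =>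
      (dB k s).fun_mul (dpdA j k s)
  have hpdF : ∀ i j : Fin n,
      pd i (fun q => (1 / 2 : ℝ) * ∑ k, ∑ s, (a q)⁻¹ k s * pd j (fun r => a r k s) q) p
      = (1 / 2 : ℝ) * ∑ k, ∑ s,
          (pd i (fun q => (a q)⁻¹ k s) p * pd j (fun r => a r k s) p
            + (a p)⁻¹ k s * pd i (pd j (fun r => a r k s)) p) := by
    intro i j
    rw [KundtAux.pd_const_mul (dF j)]
    congr 1
    rw [KundtAux.pd_sum (fun k _ => DifferentiableAt.fun_sum fun s _ => (dB k s).fun_mul (dpdA j k s))]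
    refine Finset.sum_congr rfl fun k _ => ?_
    rw [KundtAux.pd_sum (fun s _ => (dB k s).fun_mul (dpdA j k s))]
    exact Finset.sum_congr rfl fun s _ => KundtAux.pd_mul (dB k s) (dpdA j k s)
  -- antisymmetry of pd of F
  have hFanti : ∀ i j : Fin n,
      pd i (fun q => (1 / 2 : ℝ) * ∑ k, ∑ s, (a q)⁻¹ k s * pd j (fun r => a r k s) q) p
      = pd j (fun q => (1 / 2 : ℝ) * ∑ k, ∑ s, (a q)⁻¹ k s * pd i (fun r => a r k s) q) p := by
    intro i j
    rw [hpdF i j, hpdF j i]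
    congr 1
    simp only [Finset.sum_add_distrib]
    congr 1
    · -- the P-terms
      have e : ∀ (i' j' : Fin n),
          (∑ k, ∑ s, pd i' (fun q => (a q)⁻¹ k s) p * pd j' (fun r => a r k s) p)
          = -∑ k, ∑ s, ∑ t, ∑ w,
              ((a p)⁻¹ k w * pd i' (fun r => a r w t) p * (a p)⁻¹ t s)
                * pd j' (fun r => a r k s) p := by
        intro i' j'
        rw [← Finset.sum_neg_distrib]
        refine Finset.sum_congr rfl fun k _ => ?_
        rw [← Finset.sum_neg_distrib]
        refine Finset.sum_congr rfl fun s _ => ?_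
        rw [hpdB i' k s, neg_mul]
        congr 1
        simp only [Finset.sum_mul]
      rw [e i j, e j i, neg_inj]
      rw [KundtAux.sum4_swap]
      refine Finset.sum_congr rfl fun k _ => Finset.sum_congr rfl fun s _ =>
        Finset.sum_congr rfl fun t _ => Finset.sum_congr rfl fun w _ => ?_
      rw [hpd_symA p hp i s k, hpd_symA p hp j t w]
      ring
    · -- the Schwarz terms
      exact Finset.sum_congr rfl fun k _ => Finset.sum_congr rfl fun s _ => by
        rw [KundtAux.pd_comm (smA k s) i j]
  -- assemble conjunct 1
  intro i j
  have hCTpd : ∀ (i' l : Fin n), pd i' (fun q => ∑ r, christoffel a r r l q) p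
      = pd i' (fun q => (1 / 2 : ℝ) * ∑ k, ∑ s, (a q)⁻¹ k s * pd l (fun r => a r k s) q) p :=
    fun i' l => KundtAux.pd_congr_on hU hp (fun q hq => hCT_F l q hq) i'
  rw [stepA i j, hpdS i j, hpdS j i, hCTpd i j, hCTpd j i, hFanti i j]
  have h1m : (1 : ℝ) - m ≠ 0 := sub_ne_zero.mpr (Ne.symm hm)
  have key : ∀ (X Iu Ju Ki Kj : ℝ),
      (1 / 2) * ((X + (m / (2 * (1 - m)) * (n : ℝ) * Ju) * Ki)
        - (X + (m / (2 * (1 - m)) * (n : ℝ) * Iu) * Kj))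
      = -(m * (n : ℝ) / (4 * (1 - m))) * (Iu * Kj - Ju * Ki) := by
    intro X Iu Ju Ki Kj
    field_simp
    ring
  exact key _ _ _ _ _

end
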